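/- Let 0 < α < ε < 1 be constants, let c = ⌈(1+ε)n⌉ and let p satisfy log n/n ≤ p ≤ 2 log n/n. Then with probability tending to 1 as n→∞, G ~ G_c(n,p) satisfies: for every set of colors 𝒞* ⊆ [c] with |𝒞*| ≥ (1+α)n, the spanning subgraph G[[n]; 𝒞*] consisting of all edges of G whose color lies in 𝒞* is k-rainbow-pseudorandom with k = ⌈n/log^{0.49} n⌉. -/

import Mathlib

open MeasureTheory Filter
open scoped ENNReal

/-- The potential edges of a `k`-uniform hypergraph on vertex set `Fin n`. -/
abbrev HEdge (n k : ℕ) := {e : Finset (Fin n) // e.card = k}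

/-- A sample of the colored random hypergraph: each potential edge is either absent
(`none`) or present with a color from `Fin c`. -/
abbrev CSample (n k c : ℕ) := HEdge n k → Option (Fin c)

/-- A sample of the uncolored random hypergraph. -/
abbrev USample (n k : ℕ) := HEdge n k → Bool

/-- Every subset of the (finite) status space of an edge is measurable. -/
instance optionFinMeasurableSpace (c : ℕ) : MeasurableSpace (Option (Fin c)) := ⊤

/-- The distribution of the status of a single edge: absent with probability `1 - p`,
present with a uniformly random color with probability `p`. -/
noncomputable def edgePMF (c : ℕ) (p : ℝ≥0∞) : PMF (Option (Fin c)) :=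
  if h : c = 0 then PMF.pure none
  else
    haveI : Nonempty (Fin c) := ⟨⟨0, Nat.pos_of_ne_zero h⟩⟩
    (PMF.bernoulli (min p 1).toNNReal
      (by simpa using ENNReal.toNNReal_mono ENNReal.one_ne_top (min_le_right p 1))).bind fun b =>
      if b then (PMF.uniformOfFintype (Fin c)).map some else PMF.pure none

/-- The law of the randomly edge-colored random `k`-uniform hypergraph `H^k_c(n,p)`:
the edges are independent and each is present with probability `p`, receiving a
uniformly random color from `[c]`. -/
noncomputable def cHyper (n k c : ℕ) (p : ℝ≥0∞) : Measure (CSample n k c) :=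
  Measure.pi fun _ => (edgePMF c p).toMeasure

/-- The law of the uncolored binomial random `k`-uniform hypergraph `H^k(n,p)`. -/
noncomputable def uHyper (n k : ℕ) (p : ℝ≥0∞) : Measure (USample n k) :=
  Measure.pi fun _ => (PMF.bernoulli (min p 1).toNNReal
    (by simpa using ENNReal.toNNReal_mono ENNReal.one_ne_top (min_le_right p 1))).toMeasure

/-- The status of the pair `{v, w}` in a colored graph sample (k = 2):
`none` if absent (or if `v = w`), `some x` if present with color `x`. -/
def col {n c : ℕ} (ω : CSample n 2 c) (v w : Fin n) : Option (Fin c) :=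
  if h : v = w then none else ω ⟨{v, w}, Finset.card_pair h⟩

/-- Adjacency in an uncolored graph sample (k = 2). -/
def uadj {n : ℕ} (ω : USample n 2) (v w : Fin n) : Prop :=
  if h : v = w then False else ω ⟨{v, w}, Finset.card_pair h⟩ = true


set_option maxHeartbeats 1000000 in
lemma edgePMF_none (c : ℕ) (hc : c ≠ 0) (p : ℝ≥0∞) :
    edgePMF c p none = 1 - min p 1 := by
  haveI : Nonempty (Fin c) := ⟨⟨0, Nat.pos_of_ne_zero hc⟩⟩
  rw [edgePMF, dif_neg hc, PMF.bind_apply]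
  rw [tsum_bool]
  have hne : min p 1 ≠ ⊤ := ne_top_of_le_ne_top ENNReal.one_ne_top (min_le_right p 1)
  simp only [PMF.bernoulli, PMF.ofFintype_apply]
  simp [PMF.bernoulli_apply, PMF.map_apply, ENNReal.coe_toNNReal hne]

set_option maxHeartbeats 1000000 in
lemma edgePMF_some (c : ℕ) (hc : c ≠ 0) (p : ℝ≥0∞) (x : Fin c) :
    edgePMF c p (some x) = min p 1 / c := by
  haveI : Nonempty (Fin c) := ⟨⟨0, Nat.pos_of_ne_zero hc⟩⟩
  rw [edgePMF, dif_neg hc, PMF.bind_apply, tsum_bool]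
  have hne : min p 1 ≠ ⊤ := ne_top_of_le_ne_top ENNReal.one_ne_top (min_le_right p 1)
  simp only [PMF.bernoulli, PMF.ofFintype_apply]
  norm_num [PMF.bernoulli_apply, PMF.pure_apply, PMF.map_apply, ENNReal.coe_toNNReal hne]
  simp [PMF.uniformOfFintype_apply, ENNReal.div_eq_inv_mul, mul_comm]

section
variable {n c : ℕ}

lemma measurableSet_all {α : Type*} [MeasurableSpace α] (h : ‹MeasurableSpace α› = ⊤)
    (s : Set α) : MeasurableSet s := by subst h; exact MeasurableSpace.measurableSet_top

/-- The set of statuses of an edge which avoid colors outside `T`. -/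
def badStatus (T : Finset (Fin c)) : Set (Option (Fin c)) :=
  {o | o = none ∨ ∃ x ∈ T, o = some x}

set_option maxHeartbeats 1000000 in
lemma badStatus_meas_le (T : Finset (Fin c)) (hc : c ≠ 0) (p : ℝ≥0∞) :
    (edgePMF c p).toMeasure (badStatus T) ≤ 1 - min p 1 + T.card * (min p 1 / c) := by
  have hset : badStatus T ⊆ {none} ∪ ⋃ x ∈ T, {some x} := by
    rintro o (rfl | ⟨x, hx, rfl⟩)
    · exact Set.mem_union_left _ rfl
    · exact Set.mem_union_right _ (Set.mem_biUnion hx rfl)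
  refine le_trans (measure_mono hset) ?_
  refine le_trans (measure_union_le _ _) ?_
  have h1 : (edgePMF c p).toMeasure {none} = 1 - min p 1 := by
    rw [PMF.toMeasure_apply_singleton _ _ (measurableSet_all rfl _), edgePMF_none c hc]
  have h2 : (edgePMF c p).toMeasure (⋃ x ∈ T, {some x}) ≤ T.card * (min p 1 / c) := by
    refine le_trans (measure_biUnion_finset_le T _) ?_
    have : ∀ x ∈ T, (edgePMF c p).toMeasure {some x} = min p 1 / c := fun x _ => by
      rw [PMF.toMeasure_apply_singleton _ _ (measurableSet_all rfl _), edgePMF_some c hc]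
    rw [Finset.sum_congr rfl this, Finset.sum_const, nsmul_eq_mul]
  exact add_le_add h1.le h2

/-- The edges with one endpoint in `A` and the other in `B`. -/
def pairEdges (A B : Finset (Fin n)) : Finset (HEdge n 2) :=
  Finset.univ.filter fun e => ∃ a ∈ A, ∃ b ∈ B, e.1 = {a, b}

/-- The event that every `A`-`B` edge avoids colors outside `T`. -/
def Ev (A B : Finset (Fin n)) (T : Finset (Fin c)) : Set (CSample n 2 c) :=
  {ω | ∀ e ∈ pairEdges A B, ω e ∈ badStatus T}

set_option maxHeartbeats 1000000 in
lemma Ev_measure (A B : Finset (Fin n)) (T : Finset (Fin c)) (p : ℝ≥0∞) :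
    cHyper n 2 c p (Ev A B T)
      = ((edgePMF c p).toMeasure (badStatus T)) ^ (pairEdges A B).card := by
  have hEv : Ev A B T = Set.pi Set.univ
      (fun e => if e ∈ pairEdges A B then badStatus T else Set.univ) := by
    ext ω
    simp only [Ev, Set.mem_setOf_eq, Set.mem_pi, Set.mem_univ, forall_true_left]
    constructor
    · intro h e; by_cases he : e ∈ pairEdges A B <;> simp [he, h e]
    · intro h e he; have := h e; rwa [if_pos he] at this
  rw [hEv, cHyper, Measure.pi_pi]
  simp only [apply_ite ((edgePMF c p).toMeasure)]
  rw [Finset.prod_ite, Finset.prod_const, Finset.prod_const]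
  simp [Finset.filter_mem_eq_inter]

set_option maxHeartbeats 1000000 in
lemma pairEdges_card (hn : 2 ≤ n) (A B : Finset (Fin n)) (hAB : Disjoint A B) :
    A.card * B.card ≤ (pairEdges A B).card := by
  classical
  have h01 : (⟨0, by omega⟩ : Fin n) ≠ ⟨1, by omega⟩ := by simp [Fin.ext_iff]
  set e0 : HEdge n 2 := ⟨{⟨0, by omega⟩, ⟨1, by omega⟩}, Finset.card_pair h01⟩ with he0
  set f : Fin n × Fin n → HEdge n 2 := fun ab =>
    if h : ab.1 = ab.2 then e0 else ⟨{ab.1, ab.2}, Finset.card_pair h⟩ with hf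
  have hne : ∀ ab : Fin n × Fin n, ab ∈ A ×ˢ B → ab.1 ≠ ab.2 := by
    rintro ⟨a, b⟩ hab h
    rw [Finset.mem_product] at hab
    simp only at h
    exact (Finset.disjoint_left.mp hAB hab.1) (h ▸ hab.2)
  rw [← Finset.card_product]
  refine Finset.card_le_card_of_injOn f ?_ ?_
  · intro ab hab
    rcases Finset.mem_product.mp hab with ⟨ha, hb⟩
    simp only [hf, dif_neg (hne ab hab)]
    exact Finset.mem_filter.mpr ⟨Finset.mem_univ _, ab.1, ha, ab.2, hb, rfl⟩
  · intro ab hab ab' hab' heq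
    have h1 := hne ab hab
    have h2 := hne ab' hab'
    rw [hf] at heq
    simp only [dif_neg h1, dif_neg h2, Subtype.mk.injEq] at heq
    rcases Finset.mem_product.mp hab with ⟨ha, hb⟩
    rcases Finset.mem_product.mp hab' with ⟨ha', hb'⟩
    have hd := Finset.disjoint_left.mp hAB
    have m1 : ab.1 ∈ ({ab'.1, ab'.2} : Finset (Fin n)) := by
      rw [← heq]; exact Finset.mem_insert_self _ _
    have m2 : ab.2 ∈ ({ab'.1, ab'.2} : Finset (Fin n)) := by
      rw [← heq]; exact Finset.mem_insert_of_mem (Finset.mem_singleton_self _)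
    rcases Finset.mem_insert.mp m1 with e1 | e1
    · rcases Finset.mem_insert.mp m2 with e2 | e2
      · exact absurd (e2 ▸ hb) (hd ha')
      · rw [Finset.mem_singleton] at e2
        exact Prod.ext e1 e2
    · rw [Finset.mem_singleton] at e1
      exact absurd e1 (fun h => hd ha (h ▸ hb'))

/-- The "good" event: every large color set sees many colors between large disjoint sets. -/
def SGood (n c k m : ℕ) : Set (CSample n 2 c) :=
  {ω | ∀ Cstar : Finset (Fin c), m ≤ Cstar.card →
    ∀ A B : Finset (Fin n), Disjoint A B → A.card = k → B.card = k →
    n ≤ (Cstar.filter fun x => ∃ a ∈ A, ∃ b ∈ B, col ω a b = some x).card}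

def Idx (n c k t0 : ℕ) : Finset ((Finset (Fin n)) × (Finset (Fin n)) × Finset (Fin c)) :=
  Finset.univ.filter fun x =>
    x.1.card = k ∧ x.2.1.card = k ∧ Disjoint x.1 x.2.1 ∧ x.2.2.card ≤ t0

set_option maxHeartbeats 1000000 in
lemma good_compl_subset (n c k m : ℕ) :
    (SGood n c k m)ᶜ ⊆ ⋃ i ∈ Idx n c k (n + c - m), Ev i.1 i.2.1 i.2.2 := by
  intro ω hω
  simp only [SGood, Set.mem_compl_iff, Set.mem_setOf_eq, not_forall, not_le] at hω
  obtain ⟨Cstar, hCm, A, B, hAB, hA, hB, hlt⟩ := hω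
  set S := Cstar.filter fun x => ∃ a ∈ A, ∃ b ∈ B, col ω a b = some x with hS
  set T := S ∪ Cstarᶜ with hT
  have hTcard : T.card ≤ n + c - m := by
    have h1 : T.card ≤ S.card + Cstarᶜ.card := Finset.card_union_le _ _
    have h2 : Cstarᶜ.card = c - Cstar.card := by
      rw [Finset.card_compl, Fintype.card_fin]
    have h3 : Cstar.card ≤ c := le_trans (Finset.card_le_univ _) (by simp)
    omega
  refine Set.mem_biUnion (show (A, B, T) ∈ Idx n c k (n + c - m) from ?_) ?_
  · simp only [Idx, Finset.mem_filter, Finset.mem_univ, true_and]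
    exact ⟨hA, hB, hAB, hTcard⟩
  · intro e he
    simp only [pairEdges, Finset.mem_filter, Finset.mem_univ, true_and] at he
    obtain ⟨a, ha, b, hb, hab⟩ := he
    have hne : a ≠ b := fun h => Finset.disjoint_left.mp hAB ha (h ▸ hb)
    have heq : e = ⟨{a, b}, Finset.card_pair hne⟩ := Subtype.ext hab
    have hcol : col ω a b = ω e := by rw [col, dif_neg hne, heq]
    rcases ho : ω e with _ | x
    · exact Or.inl rfl
    · refine Or.inr ⟨x, ?_, rfl⟩
      by_cases hx : x ∈ Cstar
      · refine Finset.mem_union_left _ ?_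
        exact Finset.mem_filter.mpr ⟨hx, a, ha, b, hb, hcol.trans ho⟩
      · exact Finset.mem_union_right _ (Finset.mem_compl.mpr hx)

set_option maxHeartbeats 1000000 in
lemma union_bound (n c k m : ℕ) (hn : 2 ≤ n) (hc : c ≠ 0) (p : ℝ≥0∞) :
    cHyper n 2 c p (SGood n c k m)ᶜ ≤
      ((2^n * 2^n * 2^c : ℕ) : ℝ≥0∞) *
        (1 - min p 1 + ((n + c - m : ℕ) : ℝ≥0∞) * (min p 1 / (c : ℝ≥0∞))) ^ (k * k) := by
  haveI : IsProbabilityMeasure ((edgePMF c p).toMeasure) := PMF.toMeasure.isProbabilityMeasure _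
  refine le_trans (measure_mono (good_compl_subset n c k m)) ?_
  refine le_trans (measure_biUnion_finset_le _ _) ?_
  have hbound : ∀ i ∈ Idx n c k (n + c - m),
      cHyper n 2 c p (Ev i.1 i.2.1 i.2.2) ≤
        (1 - min p 1 + ((n + c - m : ℕ) : ℝ≥0∞) * (min p 1 / (c : ℝ≥0∞))) ^ (k * k) := by
    rintro ⟨A, B, T⟩ hi
    simp only [Idx, Finset.mem_filter, Finset.mem_univ, true_and] at hi
    obtain ⟨hA, hB, hAB, hT⟩ := hi
    rw [Ev_measure]
    have hb1 : (edgePMF c p).toMeasure (badStatus T) ≤ 1 := prob_le_one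
    have hkk : k * k ≤ (pairEdges A B).card := by
      have := pairEdges_card hn A B hAB; rwa [hA, hB] at this
    refine le_trans (pow_le_pow_of_le_one zero_le hb1 hkk) ?_
    refine pow_le_pow_left' ?_ _
    refine le_trans (badStatus_meas_le T hc p) ?_
    refine add_le_add_right (mul_le_mul_left (α := ℝ≥0∞) ?_ _) _
    exact_mod_cast Nat.cast_le.mpr hT
  refine le_trans (Finset.sum_le_sum hbound) ?_
  rw [Finset.sum_const, nsmul_eq_mul]
  refine mul_le_mul_left ?_ _
  have : (Idx n c k (n + c - m)).card ≤ 2^n * 2^n * 2^c := by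
    refine le_trans (Finset.card_le_univ _) ?_
    simp [Fintype.card_prod, Fintype.card_finset, mul_assoc]
  exact_mod_cast Nat.cast_le.mpr this
end


set_option maxHeartbeats 1000000 in
lemma key_bound (α ε : ℝ) (hα0 : 0 < α) (hαε : α < ε) (hε1 : ε < 1) (n : ℕ) (pn : ℝ)
    (hn2 : 2 ≤ n) (hplo : Real.log n / n ≤ pn) (hp1 : pn ≤ 1)
    (hC : 6 ≤ α / 3 * Real.log n ^ (0.02 : ℝ)) :
    ((2^n * 2^n * 2^(⌈(1+ε)*n⌉₊) : ℕ) : ℝ≥0∞) *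
      (1 - min (ENNReal.ofReal pn) 1 +
        ((n + ⌈(1+ε)*n⌉₊ - ⌈(1+α)*n⌉₊ : ℕ) : ℝ≥0∞) *
          (min (ENNReal.ofReal pn) 1 / (⌈(1+ε)*n⌉₊ : ℝ≥0∞))) ^
        (⌈(n:ℝ)/Real.log n^(0.49:ℝ)⌉₊ * ⌈(n:ℝ)/Real.log n^(0.49:ℝ)⌉₊)
      ≤ ENNReal.ofReal (Real.exp (-(n:ℝ))) := by
  set c := ⌈(1+ε)*n⌉₊ with hc
  set m := ⌈(1+α)*n⌉₊ with hm
  set k := ⌈(n:ℝ)/Real.log n^(0.49:ℝ)⌉₊ with hk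
  set L := Real.log n with hL
  -- basic real facts
  have hn0 : (0:ℝ) < n := by
    have : (2:ℝ) ≤ n := by exact_mod_cast hn2
    linarith
  have hLpos : 0 < L := by
    rw [hL]
    apply Real.log_pos
    have : (2:ℝ) ≤ n := by exact_mod_cast hn2
    linarith
  have hp0 : 0 ≤ pn := le_trans (by positivity) hplo
  have hmle : m ≤ c := Nat.ceil_le_ceil (by nlinarith)
  have hnm : n ≤ m := by
    have : ((n:ℕ):ℝ) ≤ (1+α)*n := by nlinarith
    calc n = ⌈((n:ℕ):ℝ)⌉₊ := by simp
    _ ≤ m := Nat.ceil_le_ceil this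
  have hcn : 0 < c := lt_of_lt_of_le (by omega) (le_trans hnm hmle)
  have hc0 : (0:ℝ) < c := by exact_mod_cast hcn
  have hc3n : (c:ℝ) ≤ 3*n := by
    have : c ≤ 3*n := by
      rw [hc]
      refine Nat.ceil_le.mpr ?_
      push_cast; nlinarith
    exact_mod_cast this
  have hmR : (1+α)*n ≤ (m:ℝ) := Nat.le_ceil _
  have ht0R : ((n + c - m : ℕ):ℝ) = (n:ℝ) + c - m := by
    have : m ≤ n + c := le_trans hmle (by omega)
    push_cast [Nat.cast_sub this]
    ring
  have hkR : (n:ℝ)/L^(0.49:ℝ) ≤ (k:ℝ) := Nat.le_ceil _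
  have hkpos : 0 < (n:ℝ)/L^(0.49:ℝ) := by positivity
  -- the real base
  set σ : ℝ := 1 - pn + ((n + c - m : ℕ):ℝ) * (pn / c) with hσ
  have ht0c : ((n + c - m : ℕ):ℝ) ≤ c := by
    rw [ht0R]
    have : (n:ℝ) ≤ m := by exact_mod_cast hnm
    linarith
  have hσ0 : 0 ≤ σ := by
    have h1 : 0 ≤ ((n + c - m : ℕ):ℝ) * (pn / c) := by positivity
    rw [hσ]; linarith
  have hσle : σ ≤ 1 - α/3 * (L/n) := by
    have e1 : α*n ≤ (m:ℝ) - n := by nlinarith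
    have key : α/3 ≤ ((m:ℝ) - n)/c := by
      rw [div_le_div_iff₀ (by norm_num) hc0]
      nlinarith
    have hLn : 0 ≤ L/n := by positivity
    have h2 : (L/n) * (α/3) ≤ pn * (((m:ℝ)-n)/c) :=
      mul_le_mul hplo key (by linarith) hp0
    have hσeq : σ = 1 - pn * (((m:ℝ)-n)/c) := by
      rw [hσ, ht0R]; field_simp; ring
    rw [hσeq]; nlinarith
  -- ENNReal to Real reduction
  have hmin : min (ENNReal.ofReal pn) 1 = ENNReal.ofReal pn :=
    min_eq_left (ENNReal.ofReal_le_one.mpr hp1)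
  have hbase : 1 - min (ENNReal.ofReal pn) 1 +
      ((n + c - m : ℕ):ℝ≥0∞) * (min (ENNReal.ofReal pn) 1 / (c:ℝ≥0∞)) =
      ENNReal.ofReal σ := by
    rw [hmin, hσ]
    rw [ENNReal.ofReal_add (by linarith) (by positivity)]
    congr 1
    · rw [ENNReal.ofReal_sub _ hp0, ENNReal.ofReal_one]
    · rw [ENNReal.ofReal_mul (by positivity), ENNReal.ofReal_natCast,
        ENNReal.ofReal_div_of_pos hc0, ENNReal.ofReal_natCast]
  rw [hbase, ← ENNReal.ofReal_natCast, ← ENNReal.ofReal_pow hσ0,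
    ← ENNReal.ofReal_mul (by positivity)]
  refine ENNReal.ofReal_le_ofReal ?_
  -- now pure real estimate
  have hN : ((2^n * 2^n * 2^c : ℕ):ℝ) ≤ Real.exp (5*n) := by
    push_cast
    have h2e : (2:ℝ) ≤ Real.exp 1 := by
      have := Real.add_one_le_exp (1:ℝ); linarith
    have : (2:ℝ)^n * 2^n * 2^c ≤ 2^(5*n) := by
      rw [← pow_add, ← pow_add]
      refine pow_le_pow_right₀ (by norm_num) ?_
      have : c ≤ 3*n := by exact_mod_cast (by exact_mod_cast hc3n : (c:ℝ) ≤ ((3*n:ℕ):ℝ))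
      omega
    refine le_trans this ?_
    calc (2:ℝ)^(5*n) ≤ (Real.exp 1)^(5*n) := pow_le_pow_left₀ (by norm_num) h2e _
    _ = Real.exp (5*n) := by
        rw [← Real.exp_nat_mul]; norm_num
  have hσexp : σ ≤ Real.exp (-(α/3 * (L/n))) := by
    refine le_trans hσle ?_
    have := Real.add_one_le_exp (-(α/3 * (L/n)))
    linarith
  have hσpow : σ^(k*k) ≤ Real.exp (-(α/3 * n * L^(0.02:ℝ))) := by
    calc σ^(k*k) ≤ (Real.exp (-(α/3 * (L/n))))^(k*k) := pow_le_pow_left₀ hσ0 hσexp _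
    _ = Real.exp ((k*k : ℕ) * -(α/3 * (L/n))) := by rw [Real.exp_nat_mul]
    _ ≤ Real.exp (-(α/3 * n * L^(0.02:ℝ))) := by
        refine Real.exp_le_exp.mpr ?_
        rw [mul_neg, neg_le_neg_iff]
        have hkk : (n:ℝ)^2 / L^(0.98:ℝ) ≤ ((k*k:ℕ):ℝ) := by
          push_cast
          have h1 : ((n:ℝ)/L^(0.49:ℝ))^2 ≤ (k:ℝ)^2 := pow_le_pow_left₀ hkpos.le hkR 2
          have h2 : ((n:ℝ)/L^(0.49:ℝ))^2 = (n:ℝ)^2 / L^(0.98:ℝ) := by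
            rw [div_pow, ← Real.rpow_natCast (L^(0.49:ℝ)) 2, ← Real.rpow_mul hLpos.le]
            norm_num
          calc (n:ℝ)^2/L^(0.98:ℝ) = ((n:ℝ)/L^(0.49:ℝ))^2 := h2.symm
          _ ≤ (k:ℝ)^2 := h1
          _ = (k:ℝ)*(k:ℝ) := pow_two _
        have hLsplit : L = L^(0.98:ℝ) * L^(0.02:ℝ) := by
          rw [← Real.rpow_add hLpos]; norm_num
        have hLp98 : 0 < L^(0.98:ℝ) := Real.rpow_pos_of_pos hLpos _
        have hdiv : L^(0.02:ℝ) = L / L^(0.98:ℝ) := by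
          rw [show (0.02:ℝ) = 1 - 0.98 by norm_num, Real.rpow_sub hLpos, Real.rpow_one]
        have key : α/3 * n * L^(0.02:ℝ) = α/3 * (L/n) * ((n:ℝ)^2 / L^(0.98:ℝ)) := by
          rw [hdiv]; field_simp
        rw [key]
        have h3 : 0 ≤ α/3 * (L/n) := by positivity
        calc α/3 * (L/n) * ((n:ℝ)^2/L^(0.98:ℝ)) ≤ α/3 * (L/n) * ((k*k:ℕ):ℝ) :=
          mul_le_mul_of_nonneg_left hkk h3
        _ = (k*k:ℕ) * (α/3 * (L/n)) := by ring
  calc ((2^n * 2^n * 2^c : ℕ):ℝ) * σ^(k*k)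
      ≤ Real.exp (5*n) * Real.exp (-(α/3 * n * L^(0.02:ℝ))) :=
        mul_le_mul hN hσpow (pow_nonneg hσ0 _) (Real.exp_pos _).le
    _ = Real.exp (5*n - α/3 * n * L^(0.02:ℝ)) := by rw [← Real.exp_add]; ring_nf
    _ ≤ Real.exp (-(n:ℝ)) := by
        refine Real.exp_le_exp.mpr ?_
        have : 6 * (n:ℝ) ≤ α/3 * L^(0.02:ℝ) * n :=
          mul_le_mul_of_nonneg_right hC hn0.le
        nlinarith


set_option maxHeartbeats 1000000 in
lemma lower_bound (α ε : ℝ) (hα0 : 0 < α) (hαε : α < ε) (hε1 : ε < 1) (n : ℕ) (pn : ℝ)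
    (hn2 : 2 ≤ n) (hplo : Real.log n / n ≤ pn) (hp1 : pn ≤ 1)
    (hC : 6 ≤ α / 3 * Real.log n ^ (0.02 : ℝ)) :
    1 - ENNReal.ofReal (Real.exp (-(n:ℝ))) ≤
      cHyper n 2 ⌈(1+ε)*n⌉₊ (ENNReal.ofReal pn)
        (SGood n ⌈(1+ε)*n⌉₊ ⌈(n:ℝ)/Real.log n^(0.49:ℝ)⌉₊ ⌈(1+α)*n⌉₊) := by
  set c := ⌈(1+ε)*n⌉₊ with hcdef
  set m := ⌈(1+α)*n⌉₊ with hmdef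
  set k := ⌈(n:ℝ)/Real.log n^(0.49:ℝ)⌉₊ with hkdef
  set μ := cHyper n 2 c (ENNReal.ofReal pn) with hμ
  haveI : IsProbabilityMeasure μ := by
    rw [hμ, cHyper]; infer_instance
  have hc0 : c ≠ 0 := by
    have : (1:ℝ) * n ≤ (1+ε)*n := by
      have : (0:ℝ) ≤ n := Nat.cast_nonneg _
      nlinarith
    have h2 : n ≤ c := by
      calc n = ⌈((n:ℕ):ℝ)⌉₊ := by simp
      _ ≤ c := Nat.ceil_le_ceil (by simpa using this)
    omega
  set G := SGood n c k m with hG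
  have hBad : μ Gᶜ ≤ ENNReal.ofReal (Real.exp (-(n:ℝ))) := by
    refine le_trans (union_bound n c k m hn2 hc0 (ENNReal.ofReal pn)) ?_
    exact key_bound α ε hα0 hαε hε1 n pn hn2 hplo hp1 hC
  have h1 : (1:ℝ≥0∞) ≤ μ G + μ Gᶜ := by
    calc (1:ℝ≥0∞) = μ Set.univ := measure_univ.symm
    _ = μ (G ∪ Gᶜ) := by rw [Set.union_compl_self]
    _ ≤ μ G + μ Gᶜ := measure_union_le _ _
  calc 1 - ENNReal.ofReal (Real.exp (-(n:ℝ))) ≤ 1 - μ Gᶜ := tsub_le_tsub_left hBad 1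
  _ ≤ μ G := tsub_le_iff_right.mpr h1



/-- For constants `0 < α < ε < 1`, `c = ⌈(1+ε)n⌉` colors and
`log n/n ≤ p ≤ 2 log n/n`, w.h.p. `G ~ G_c(n,p)` is such that for every color set
`C*` of size at least `(1+α)n`, the subgraph `G[[n]; C*]` is
`k`-rainbow-pseudorandom with `k = ⌈n/log^{0.49} n⌉`: between any two disjoint
vertex sets of size `k` at least `n` distinct colors from `C*` appear. -/

theorem whp_rainbow_pseudorandom (α ε : ℝ) (hα0 : 0 < α) (hαε : α < ε) (hε1 : ε < 1)
    (p : ℕ → ℝ) (hplo : ∀ n : ℕ, Real.log n / n ≤ p n)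
    (hphi : ∀ n : ℕ, p n ≤ 2 * Real.log n / n) :
    Tendsto (fun n : ℕ => cHyper n 2 ⌈(1 + ε) * n⌉₊ (ENNReal.ofReal (p n))
      {ω | ∀ Cstar : Finset (Fin ⌈(1 + ε) * n⌉₊),
        (1 + α) * n ≤ (Cstar.card : ℝ) →
        ∀ A B : Finset (Fin n), Disjoint A B →
        A.card = ⌈(n : ℝ) / Real.log n ^ (0.49 : ℝ)⌉₊ →
        B.card = ⌈(n : ℝ) / Real.log n ^ (0.49 : ℝ)⌉₊ →
        n ≤ (Cstar.filter fun x => ∃ a ∈ A, ∃ b ∈ B, col ω a b = some x).card})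
      atTop (nhds 1) := by
  have hlower : Tendsto (fun n : ℕ => 1 - ENNReal.ofReal (Real.exp (-(n:ℝ))))
      atTop (nhds 1) := by
    have hreal : Tendsto (fun n : ℕ => Real.exp (-(n:ℝ))) atTop (nhds 0) :=
      Real.tendsto_exp_neg_atTop_nhds_zero.comp tendsto_natCast_atTop_atTop
    have h0 : Tendsto (fun n : ℕ => ENNReal.ofReal (Real.exp (-(n:ℝ)))) atTop (nhds 0) := by
      have := (ENNReal.continuous_ofReal.tendsto 0).comp hreal
      simpa [Function.comp_def] using this
    have := ENNReal.Tendsto.sub (tendsto_const_nhds : Tendsto (fun _ : ℕ => (1:ℝ≥0∞)) atTop (nhds 1)) h0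
      (Or.inl ENNReal.one_ne_top)
    simpa using this
  -- eventual hypotheses
  have ev1 : ∀ᶠ n : ℕ in atTop, 2 ≤ n := eventually_atTop.mpr ⟨2, fun n hn => hn⟩
  have ev2 : ∀ᶠ n : ℕ in atTop, p n ≤ 1 := by
    have hlog : Tendsto (fun n : ℕ => Real.log n / n) atTop (nhds 0) :=
      Real.isLittleO_log_id_atTop.tendsto_div_nhds_zero.comp tendsto_natCast_atTop_atTop
    filter_upwards [hlog.eventually (gt_mem_nhds (by norm_num : (0:ℝ) < 1/2))] with n hn
    have := hphi n
    calc p n ≤ 2 * Real.log n / n := this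
    _ = 2 * (Real.log n / n) := by ring
    _ ≤ 1 := by linarith
  have ev3 : ∀ᶠ n : ℕ in atTop, 6 ≤ α / 3 * Real.log n ^ (0.02 : ℝ) := by
    have h1 : Tendsto (fun n : ℕ => Real.log n ^ (0.02 : ℝ)) atTop atTop :=
      (tendsto_rpow_atTop (by norm_num)).comp
        (Real.tendsto_log_atTop.comp tendsto_natCast_atTop_atTop)
    have h2 : Tendsto (fun n : ℕ => α / 3 * Real.log n ^ (0.02 : ℝ)) atTop atTop :=
      h1.const_mul_atTop (by positivity)
    exact h2.eventually_ge_atTop 6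
  refine tendsto_of_tendsto_of_tendsto_of_le_of_le' hlower tendsto_const_nhds ?_ ?_
  · filter_upwards [ev1, ev2, ev3] with n hn2 hp1 hC6
    refine le_trans (lower_bound α ε hα0 hαε hε1 n (p n) hn2 (hplo n) hp1 hC6) ?_
    refine measure_mono ?_
    intro ω hω Cstar hCs A B hd hA hB
    exact hω Cstar (Nat.ceil_le.mpr hCs) A B hd hA hB
  · refine Eventually.of_forall fun n => ?_
    haveI : IsProbabilityMeasure
        (cHyper n 2 ⌈(1 + ε) * n⌉₊ (ENNReal.ofReal (p n))) := by
      rw [cHyper]; infer_instance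
    exact prob_le_one
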